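/- Let I be an instance with types satisfying the supply condition, let J ∈ A_γ(Q(I), h) for some signpost sequence γ, and let E_J be the output of the greedy & parity correction algorithm. Suppose the type-oblivious solution T_J does not satisfy type parity (A), let t* be the over-represented type in T_J, and let ℓ = Prefix(V(E_J), V(T_J)) < |C|. Then every candidate c of type t* with E_J(c) = 1 satisfies Rank_I(c) ≤ ℓ, where Rank_I(c) is the position of c in the order ≻. -/

import Mathlib

open Finset

/-- A signpost sequence: `γ 0 = 0`, `γ n ∈ [n-1, n]` for `n ≥ 1`, and the
disjunction property. -/
def Signpost (γ : ℕ → ℝ) : Prop :=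
  γ 0 = 0 ∧
  (∀ n : ℕ, 1 ≤ n → ((n : ℝ) - 1 ≤ γ n ∧ γ n ≤ n)) ∧
  ((∃ k : ℕ, 2 ≤ k ∧ γ k = (k : ℝ) - 1) → ∀ l : ℕ, 1 ≤ l → γ l < l) ∧
  ((∃ k : ℕ, 1 ≤ k ∧ γ k = (k : ℝ)) → ∀ l : ℕ, 2 ≤ l → (l : ℝ) - 1 < γ l)

/-- The rounding rule `R_γ` of a signpost sequence, as a set-valued map:
`R_γ(0) = {0}`, `R_γ(t) = {n}` for `t ∈ (γ n, γ (n+1))`, and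
`R_γ(t) = {n-1, n}` when `t = γ n > 0`. -/
def roundSet (γ : ℕ → ℝ) (t : ℝ) : Set ℕ :=
  {k | (t = 0 ∧ k = 0) ∨ (γ k < t ∧ t < γ (k + 1)) ∨ (0 < t ∧ (t = γ k ∨ t = γ (k + 1)))}

/-- The divisor method solution set `A_γ(Q, h)`. -/
def divisorSet (γ : ℕ → ℝ) {n : ℕ} (Q : Fin n → ℝ) (h : ℕ) : Set (Fin n → ℕ) :=
  {S | (∑ i, S i) = h ∧ ∃ lam : ℝ, 0 < lam ∧ ∀ i, S i ∈ roundSet γ (Q i / lam)}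

/-- The two candidate types. -/
inductive MType
  | f | m
deriving DecidableEq

instance instFintypeMType : Fintype MType where
  elems := {MType.f, MType.m}
  complete := fun x => by cases x <;> decide

/-- The other type. -/
def MType.other : MType → MType
  | .f => .m
  | .m => .f

/-- An instance of the apportionment problem with type parity: a finite candidate
set `C`, a party map, a (nonnegative real) vote map, a type map, a house size
`h ≥ 1` and a total order (the field `ord`) refining the votes. -/
structure TypedInstance (n : ℕ) (C : Type) [Fintype C] [DecidableEq C] where
  ord : LinearOrder C
  party : C → Fin n
  votes : C → ℝ
  votes_nonneg : ∀ c, 0 ≤ votes c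
  mtype : C → MType
  h : ℕ
  h_pos : 1 ≤ h
  refines : ∀ c c' : C, votes c' < votes c → ord.lt c' c

namespace TypedInstance

variable {n : ℕ} {C : Type} [Fintype C] [DecidableEq C]

/-- The candidates of party `i`. -/
def Ci (I : TypedInstance n C) (i : Fin n) : Finset C :=
  univ.filter fun c => I.party c = i

/-- The candidates of type `t`. -/
def Ct (I : TypedInstance n C) (t : MType) : Finset C :=
  univ.filter fun c => I.mtype c = t

/-- The candidates of party `i` and type `t`. -/
def Cit (I : TypedInstance n C) (i : Fin n) (t : MType) : Finset C :=
  univ.filter fun c => I.party c = i ∧ I.mtype c = t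

/-- The party vote totals `Q(I)`. -/
def Q (I : TypedInstance n C) : Fin n → ℝ := fun i => ∑ c ∈ I.Ci i, I.votes c

/-- The party × type vote totals `P(I)`. -/
def P (I : TypedInstance n C) : Fin n → MType → ℝ := fun i t => ∑ c ∈ I.Cit i t, I.votes c

/-- The supply matrix `S(I)`. -/
def S (I : TypedInstance n C) : Fin n → MType → ℕ := fun i t => (I.Cit i t).card

/-- The supply condition: `|C_i^t| ≥ ⌈h/2⌉` for every party `i` and type `t`. -/
def SupplyCond (I : TypedInstance n C) : Prop :=
  ∀ (i : Fin n) (t : MType), (I.h + 1) / 2 ≤ (I.Cit i t).card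

/-- Type parity condition (A): the numbers of elected candidates of the two types
differ by exactly `h mod 2`. Allocations are represented by the finset of elected
candidates. -/
def CondA (I : TypedInstance n C) (E : Finset C) : Prop :=
  (((E.filter fun c => I.mtype c = MType.f).card : ℤ) -
    ((E.filter fun c => I.mtype c = MType.m).card : ℤ)).natAbs = I.h % 2

instance (I : TypedInstance n C) (E : Finset C) : Decidable (I.CondA E) := by
  unfold CondA; infer_instance

/-- The number of elected candidates of each party. -/
def partyCount (I : TypedInstance n C) (E : Finset C) : Fin n → ℕ :=
  fun i => (E.filter fun c => I.party c = i).card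

/-- The number of elected candidates of each type. -/
def typeCount (I : TypedInstance n C) (E : Finset C) : MType → ℕ :=
  fun t => (E.filter fun c => I.mtype c = t).card

/-- Party proportionality condition (B) w.r.t. a signpost sequence `γ`. -/
def CondB (I : TypedInstance n C) (γ : ℕ → ℝ) (E : Finset C) : Prop :=
  ∃ J ∈ divisorSet γ I.Q I.h, ∀ i, I.partyCount E i = J i

/-- The set `X(I, γ)` of feasible allocations. -/
def X (I : TypedInstance n C) (γ : ℕ → ℝ) : Set (Finset C) :=
  {E | I.CondA E ∧ I.CondB γ E}

/-- The polytope `Z(I, J, γ)` of fractional allocations. -/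
def Z (I : TypedInstance n C) (J : Fin n → ℕ) : Set (Fin n → MType → ℝ) :=
  {y | (∀ t : MType, ((I.h / 2 : ℕ) : ℝ) ≤ ∑ i, y i t) ∧
       (∀ i : Fin n, y i MType.f + y i MType.m = (J i : ℝ)) ∧
       (∀ (i : Fin n) (t : MType), 0 ≤ y i t ∧ y i t ≤ ((I.Cit i t).card : ℝ))}

/-- The scaled instance `αI` (same candidate order). -/
def scale (I : TypedInstance n C) (α : ℝ) (hα : 0 < α) : TypedInstance n C where
  ord := I.ord
  party := I.party
  votes := fun c => α * I.votes c
  votes_nonneg := fun c => mul_nonneg hα.le (I.votes_nonneg c)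
  mtype := I.mtype
  h := I.h
  h_pos := I.h_pos
  refines := fun c c' hlt => I.refines c c' (lt_of_mul_lt_mul_left hlt hα.le)

/-- `G` is a voting increment of `I` in candidate `c`: identical to `I` except
that `c` garners strictly more votes. -/
def VotingIncrement (I G : TypedInstance n C) (c : C) : Prop :=
  G.party = I.party ∧ G.mtype = I.mtype ∧ G.h = I.h ∧
  I.votes c < G.votes c ∧ ∀ c' : C, c' ≠ c → G.votes c' = I.votes c'

/-- The rank of a candidate in the order `≻`: position `1` is the top candidate. -/
def rank (I : TypedInstance n C) (c : C) : ℕ :=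
  letI := I.ord
  (univ.filter fun c' => c ≤ c').card

/-- The top `k` candidates of a subset `D` according to the order of `I`. -/
def topOf (I : TypedInstance n C) (D : Finset C) (k : ℕ) : Finset C :=
  letI := I.ord
  D.filter fun c => (D.filter fun c' => c ≤ c').card ≤ k

/-- The type-oblivious solution `T_J`: in every party `i`, the top `J i`
candidates of `C_i` are elected. -/
def oblivious (I : TypedInstance n C) (J : Fin n → ℕ) : Finset C :=
  univ.filter fun c => c ∈ I.topOf (I.Ci (I.party c)) (J (I.party c))

/-- The over-represented type of an allocation (type `f` in case of a tie). -/
def overType (I : TypedInstance n C) (E : Finset C) : MType :=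
  if I.typeCount E MType.m ≤ I.typeCount E MType.f then MType.f else MType.m

/-- One parity-correction swap: the worst-ranked elected candidate of the
over-represented type is replaced by the best-ranked unelected candidate of the
same party and of the under-represented type (if any; otherwise nothing happens). -/
def swapStep (I : TypedInstance n C) (E : Finset C) : Finset C :=
  letI := I.ord
  let t := I.overType E
  let elected := E.filter fun c => I.mtype c = t
  if hE : elected.Nonempty then
    let s := elected.min' hE
    let pool := univ.filter fun c => c ∉ E ∧ I.party c = I.party s ∧ I.mtype c = t.other
    if hp : pool.Nonempty then insert (pool.max' hp) (E.erase s) else E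
  else E

/-- The parity-correction loop (with fuel). -/
def greedyAux (I : TypedInstance n C) : ℕ → Finset C → Finset C
  | 0, E => E
  | k + 1, E => if I.CondA E then E else greedyAux I k (I.swapStep E)

/-- The output `E_J` of the greedy & parity correction algorithm. -/
def greedy (I : TypedInstance n C) (J : Fin n → ℕ) : Finset C :=
  greedyAux I I.h (I.oblivious J)

/-- The greedy & parity correction mechanism `M^G`. -/
def MG (I : TypedInstance n C) (γ : ℕ → ℝ) : Set (Finset C) :=
  {E | ∃ J ∈ divisorSet γ I.Q I.h, E = I.greedy J}

/-- Two allocations agree on all candidates of rank at most `l`. -/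
def agreeUpTo (I : TypedInstance n C) (E₁ E₂ : Finset C) (l : ℕ) : Prop :=
  ∀ c : C, I.rank c ≤ l → (c ∈ E₁ ↔ c ∈ E₂)

instance (I : TypedInstance n C) (E₁ E₂ : Finset C) (l : ℕ) :
    Decidable (I.agreeUpTo E₁ E₂ l) := by
  unfold agreeUpTo; infer_instance

/-- The length of the common prefix of two allocations (w.r.t. the ranking). -/
def prefixLen (I : TypedInstance n C) (E₁ E₂ : Finset C) : ℕ :=
  ((Finset.range (Fintype.card C + 1)).filter fun l => I.agreeUpTo E₁ E₂ l).sup id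

/-- The vote-leading type (type `f` in case of a tie; this tie-breaking rule is
scaling invariant). -/
noncomputable def voteLeading (I : TypedInstance n C) : MType :=
  if (∑ c ∈ I.Ct MType.f, I.votes c) < (∑ c ∈ I.Ct MType.m, I.votes c) then MType.m
  else MType.f

/-- The parity marginal `φ(I)`: for even `h` both types get `h/2`; for odd `h` the
vote-leading type gets `⌈h/2⌉`. -/
noncomputable def parityMarginal (I : TypedInstance n C) : MType → ℕ :=
  fun t => if t = I.voteLeading then (I.h + 1) / 2 else I.h / 2

end TypedInstance

/-- `(x, lam, mu)` is a `δ`-biproportional solution of the two-dimensional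
instance with supply `(P, S, J, φ)`. -/
def IsBipropSol (δ : ℕ → ℝ) {n : ℕ} (P : Fin n → MType → ℝ) (S : Fin n → MType → ℕ)
    (J : Fin n → ℕ) (φ : MType → ℕ) (x : Fin n → MType → ℕ)
    (lam : Fin n → ℝ) (mu : MType → ℝ) : Prop :=
  (∀ i, 0 < lam i) ∧ (∀ t, 0 < mu t) ∧
  (∀ (i : Fin n) (t : MType), x i t < S i t → x i t ∈ roundSet δ (P i t * lam i * mu t)) ∧
  (∀ i : Fin n, x i MType.f + x i MType.m = J i) ∧
  (∀ t : MType, (∑ i, x i t) = φ t) ∧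
  (∀ (i : Fin n) (t : MType), x i t ≤ S i t)

/-- The set `B_δ(P, S, J, φ)` of `δ`-biproportional solutions. -/
def bipropSet (δ : ℕ → ℝ) {n : ℕ} (P : Fin n → MType → ℝ) (S : Fin n → MType → ℕ)
    (J : Fin n → ℕ) (φ : MType → ℕ) : Set (Fin n → MType → ℕ) :=
  {x | ∃ lam mu, IsBipropSol δ P S J φ x lam mu}

/-- `δ`-biproportional solutions of a two-dimensional instance `(P, J, φ)`
without supply bounds. -/
def IsBipropSolNS (δ : ℕ → ℝ) {n : ℕ} (P : Fin n → MType → ℝ)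
    (J : Fin n → ℕ) (φ : MType → ℕ) (x : Fin n → MType → ℕ)
    (lam : Fin n → ℝ) (mu : MType → ℝ) : Prop :=
  (∀ i, 0 < lam i) ∧ (∀ t, 0 < mu t) ∧
  (∀ (i : Fin n) (t : MType), x i t ∈ roundSet δ (P i t * lam i * mu t)) ∧
  (∀ i : Fin n, x i MType.f + x i MType.m = J i) ∧
  (∀ t : MType, (∑ i, x i t) = φ t)

/-- The set `B_δ(P, J, φ)` for instances without supply bounds. -/
def bipropSetNS (δ : ℕ → ℝ) {n : ℕ} (P : Fin n → MType → ℝ)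
    (J : Fin n → ℕ) (φ : MType → ℕ) : Set (Fin n → MType → ℕ) :=
  {x | ∃ lam mu, IsBipropSolNS δ P J φ x lam mu}

/-- `F` is a fair share (matrix scaling) of the two-dimensional instance
`(P, J, φ)`. -/
def IsFairShare {n : ℕ} (P : Fin n → MType → ℝ) (J : Fin n → ℕ) (φ : MType → ℕ)
    (F : Fin n → MType → ℝ) : Prop :=
  ∃ (lam : Fin n → ℝ) (mu : MType → ℝ),
    (∀ i, 0 < lam i) ∧ (∀ t, 0 < mu t) ∧ (∀ i t, 0 < F i t) ∧
    (∀ (i : Fin n) (t : MType), F i t = P i t * lam i * mu t) ∧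
    (∀ i : Fin n, F i MType.f + F i MType.m = (J i : ℝ)) ∧
    (∀ t : MType, (∑ i, F i t) = (φ t : ℝ))

namespace TypedInstance

variable {n : ℕ} {C : Type} [Fintype C] [DecidableEq C]

/-- The allocation `E_x` electing, for every party `i` and type `t`, the top
`x i t` candidates of `C_i^t`. -/
def allocOf (I : TypedInstance n C) (x : Fin n → MType → ℕ) : Finset C :=
  univ.filter fun c =>
    c ∈ I.topOf (I.Cit (I.party c) (I.mtype c)) (x (I.party c) (I.mtype c))

/-- The `δ`-biproportional parity mechanism `M^B_δ`. -/
def MB (I : TypedInstance n C) (δ γ : ℕ → ℝ) : Set (Finset C) :=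
  {E | ∃ J ∈ divisorSet γ I.Q I.h,
        ∃ x ∈ bipropSet δ I.P I.S J I.parityMarginal, E = I.allocOf x}

end TypedInstance

section Aux
variable {n : ℕ} {C : Type} [Fintype C] [DecidableEq C]

theorem mtype_other_ne (t : MType) : t.other ≠ t := by cases t <;> simp [MType.other]

theorem aux_rank_lt (I : TypedInstance n C) {c c' : C} (h : I.ord.lt c c') :
    I.rank c' < I.rank c := by
  letI := I.ord
  unfold TypedInstance.rank
  apply Finset.card_lt_card
  constructor
  · intro x hx
    simp only [Finset.mem_filter, Finset.mem_univ, true_and] at hx ⊢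
    exact le_trans (le_of_lt h) hx
  · intro hsub
    have h1 : c ∈ Finset.univ.filter (fun x => c ≤ x) := by simp
    have h2 := hsub h1
    simp only [Finset.mem_filter, Finset.mem_univ, true_and] at h2
    exact absurd h2 (not_le.mpr h)

theorem aux_mem_topOf (I : TypedInstance n C) (D : Finset C) (k : ℕ) (c : C) :
    c ∈ I.topOf D k ↔ c ∈ D ∧ (D.filter fun c' => I.ord.le c c').card ≤ k := by
  letI := I.ord
  unfold TypedInstance.topOf
  exact Finset.mem_filter

theorem aux_mem_oblivious (I : TypedInstance n C) (J : Fin n → ℕ) (c : C) :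
    c ∈ I.oblivious J ↔ c ∈ I.topOf (I.Ci (I.party c)) (J (I.party c)) := by
  unfold TypedInstance.oblivious
  simp

theorem aux_typeCount_eq (I : TypedInstance n C) (E : Finset C) (t : MType) :
    I.typeCount E t = (E.filter fun c => I.mtype c = t).card := rfl

theorem aux_typeCount_add (I : TypedInstance n C) (E : Finset C) (t : MType) :
    I.typeCount E t + I.typeCount E t.other = E.card := by
  have h1 := Finset.card_filter_add_card_filter_not (s := E) (p := fun c => I.mtype c = t)
  have h2 : E.filter (fun a => ¬ I.mtype a = t) = E.filter (fun c => I.mtype c = t.other) := by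
    apply Finset.filter_congr
    intro c _
    cases t <;> cases hc : I.mtype c <;> simp [MType.other, hc]
  rw [aux_typeCount_eq, aux_typeCount_eq, ← h2, h1]

set_option linter.unusedSectionVars false

section Ord
variable [LinearOrder C]
theorem aux_topOf_card (D : Finset C) (k : ℕ) :
    (D.filter fun c => (D.filter fun c' => c ≤ c').card ≤ k).card = min k D.card := by
  classical
  set r : C → ℕ := fun c => (D.filter fun c' => c ≤ c').card with hr
  have hanti : ∀ c ∈ D, ∀ c' ∈ D, c < c' → r c' < r c := by
    intro c hc c' hc' hlt
    apply Finset.card_lt_card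
    constructor
    · intro x hx
      simp only [Finset.mem_filter] at hx ⊢
      exact ⟨hx.1, le_trans hlt.le hx.2⟩
    · intro hsub
      have hcm : c ∈ D.filter fun x => c ≤ x := by simp [hc]
      have h2 := hsub hcm
      simp only [Finset.mem_filter] at h2
      exact absurd h2.2 (not_le.mpr hlt)
  have hinj : Set.InjOn r D := by
    intro a ha b hb hab
    by_contra hne
    rcases lt_or_gt_of_ne hne with h | h
    · exact (hanti a ha b hb h).ne' hab
    · exact (hanti b hb a ha h).ne hab
  have himg : D.image r = Finset.Icc 1 D.card := by
    apply Finset.eq_of_subset_of_card_le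
    · intro x hx
      simp only [Finset.mem_image] at hx
      obtain ⟨c, hc, rfl⟩ := hx
      simp only [Finset.mem_Icc]
      refine ⟨Finset.card_pos.mpr ⟨c, by simp [hc]⟩, Finset.card_le_card (Finset.filter_subset _ _)⟩
    · rw [Finset.card_image_of_injOn hinj, Nat.card_Icc]
      omega
  have hfilt : (D.filter fun c => r c ≤ k).image r = (D.image r).filter (· ≤ k) :=
    (Finset.filter_image (p := (· ≤ k)) (f := r) (s := D)).symm
  have hcard : ((D.filter fun c => r c ≤ k).image r).card = (D.filter fun c => r c ≤ k).card :=
    Finset.card_image_of_injOn (hinj.mono (Finset.coe_subset.mpr (Finset.filter_subset _ _)))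
  have h3 : (Finset.Icc 1 D.card).filter (· ≤ k) = Finset.Icc 1 (min k D.card) := by
    ext x
    simp only [Finset.mem_filter, Finset.mem_Icc]
    omega
  calc (D.filter fun c => r c ≤ k).card = ((D.filter fun c => r c ≤ k).image r).card := hcard.symm
    _ = ((D.image r).filter (· ≤ k)).card := by rw [hfilt]
    _ = (Finset.Icc 1 (min k D.card)).card := by rw [himg, h3]
    _ = min k D.card := by rw [Nat.card_Icc]; omega

end Ord

end Aux

section Aux3
variable {n : ℕ} {C : Type} [Fintype C] [DecidableEq C]
set_option linter.unusedSectionVars false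

theorem aux_topOf_card' (I : TypedInstance n C) (D : Finset C) (k : ℕ) :
    (I.topOf D k).card = min k D.card := by
  letI := I.ord
  unfold TypedInstance.topOf
  exact aux_topOf_card D k

theorem aux_Ci_card (I : TypedInstance n C) (hsup : I.SupplyCond) (i : Fin n) :
    I.h ≤ (I.Ci i).card := by
  have hf := hsup i MType.f
  have hm := hsup i MType.m
  have hsub : I.Cit i MType.f ∪ I.Cit i MType.m ⊆ I.Ci i := by
    intro c hc
    simp only [Finset.mem_union, TypedInstance.Cit, TypedInstance.Ci, Finset.mem_filter,
      Finset.mem_univ, true_and] at hc ⊢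
    tauto
  have hdisj : Disjoint (I.Cit i MType.f) (I.Cit i MType.m) := by
    rw [Finset.disjoint_left]
    intro c hc hc'
    simp only [TypedInstance.Cit, Finset.mem_filter] at hc hc'
    rw [hc.2.2] at hc'
    simp at hc'
  have := Finset.card_le_card hsub
  rw [Finset.card_union_of_disjoint hdisj] at this
  omega

theorem aux_oblivious_card (I : TypedInstance n C) (hsup : I.SupplyCond)
    (J : Fin n → ℕ) (hsum : ∑ i, J i = I.h) :
    (I.oblivious J).card = I.h := by
  have hpart : ∀ i, ((I.oblivious J).filter fun c => I.party c = i) = I.topOf (I.Ci i) (J i) := by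
    intro i
    ext c
    simp only [Finset.mem_filter, aux_mem_oblivious]
    constructor
    · rintro ⟨h1, h2⟩; rwa [h2] at h1
    · intro h1
      have hc : c ∈ I.Ci i := ((aux_mem_topOf I _ _ c).mp h1).1
      have hpc : I.party c = i := by
        simpa [TypedInstance.Ci] using hc
      exact ⟨by rwa [hpc], hpc⟩
  rw [Finset.card_eq_sum_card_fiberwise (f := I.party) (t := Finset.univ) (fun c _ => Finset.mem_univ _)]
  have hterm : ∀ i, ((I.oblivious J).filter fun c => I.party c = i).card = J i := by
    intro i
    rw [hpart i, aux_topOf_card']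
    have h1 : J i ≤ I.h := hsum ▸ Finset.single_le_sum (f := J) (fun _ _ => Nat.zero_le _) (Finset.mem_univ i)
    have h2 := aux_Ci_card I hsup i
    omega
  rw [Finset.sum_congr rfl (fun i _ => hterm i), hsum]

end Aux3

section Inv
variable {n : ℕ} {C : Type} [Fintype C] [DecidableEq C]
set_option linter.unusedSectionVars false

/-- Loop invariant for the parity-correction algorithm. -/
def GreedyInv (I : TypedInstance n C) (T : Finset C) (t : MType) (E : Finset C) : Prop :=
  (∀ c ∈ E, c ∉ T → I.mtype c = t.other) ∧
  (∀ c ∈ T, c ∉ E → I.mtype c = t) ∧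
  (∀ c ∈ T, c ∉ E → ∀ c' ∈ E, I.mtype c' = t → I.ord.lt c c') ∧
  (∀ c ∈ E, c ∉ T → ∀ c' ∈ E, I.mtype c' = t → I.ord.lt c c') ∧
  I.typeCount E t.other ≤ I.typeCount E t ∧
  (I.typeCount E t - I.typeCount E t.other) % 2 = I.h % 2

theorem aux_inv_swap (I : TypedInstance n C) (J : Fin n → ℕ) (t : MType) (E : Finset C)
    (hnA : ¬ I.CondA E) (hI : GreedyInv I (I.oblivious J) t E) :
    GreedyInv I (I.oblivious J) t (I.swapStep E) := by
  classical
  letI := I.ord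
  obtain ⟨h1, h2, h3, h4, hle, hpar⟩ := hI
  have hd2 : 2 ≤ I.typeCount E t - I.typeCount E t.other := by
    unfold TypedInstance.CondA at hnA
    rw [← aux_typeCount_eq, ← aux_typeCount_eq] at hnA
    cases t <;> simp only [MType.other] at hle hpar ⊢ <;> omega
  have hover : I.overType E = t := by
    unfold TypedInstance.overType
    cases t <;> simp only [MType.other] at hle hd2 ⊢
    · rw [if_pos hle]
    · rw [if_neg (by omega)]
  set elected := E.filter (fun c => I.mtype c = t) with helected
  have hEne : elected.Nonempty := by
    rw [← Finset.card_pos, helected, ← aux_typeCount_eq]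
    omega
  set s := elected.min' hEne with hs
  obtain ⟨hsE, hstype⟩ := Finset.mem_filter.mp (elected.min'_mem hEne)
  rw [← hs] at hsE hstype
  set pool := Finset.univ.filter (fun c => c ∉ E ∧ I.party c = I.party s ∧ I.mtype c = t.other) with hpool
  by_cases hp : pool.Nonempty
  case neg =>
    have : I.swapStep E = E := by
      unfold TypedInstance.swapStep
      rw [hover]
      rw [dif_pos hEne, dif_neg hp]
    rw [this]
    exact ⟨h1, h2, h3, h4, hle, hpar⟩
  set b := pool.max' hp with hb
  obtain ⟨-, hbE, hbparty, hbtype⟩ := Finset.mem_filter.mp (pool.max'_mem hp)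
  rw [← hb] at hbE hbparty hbtype
  have hstep : I.swapStep E = insert b (E.erase s) := by
    unfold TypedInstance.swapStep
    rw [hover]
    rw [dif_pos hEne, dif_pos hp]
  -- key facts
  have hsT : s ∈ I.oblivious J := by
    by_contra h
    have := h1 s hsE h
    rw [hstype] at this
    exact mtype_other_ne t this.symm
  have hbT : b ∉ I.oblivious J := by
    intro h
    have := h2 b h hbE
    rw [hbtype] at this
    exact mtype_other_ne t this
  have hbs : I.ord.lt b s := by
    rw [aux_mem_oblivious, aux_mem_topOf] at hsT
    rw [aux_mem_oblivious, hbparty] at hbT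
    by_contra h
    have hsb : s ≤ b := not_lt.mp h
    apply hbT
    rw [aux_mem_topOf]
    constructor
    · simp [TypedInstance.Ci, hbparty]
    · refine le_trans (le_trans (Finset.card_le_card ?_) le_rfl) hsT.2
      intro x hx
      simp only [Finset.mem_filter] at hx ⊢
      exact ⟨hx.1, le_trans hsb hx.2⟩
  -- membership in the new set
  have hbns : b ≠ s := by
    intro h
    rw [h] at hbE
    exact hbE hsE
  have hmem : ∀ c, c ∈ insert b (E.erase s) ↔ c = b ∨ (c ∈ E ∧ c ≠ s) := by
    intro c
    simp only [Finset.mem_insert, Finset.mem_erase]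
    tauto
  -- counts
  have hcount_t : I.typeCount (insert b (E.erase s)) t = I.typeCount E t - 1 := by
    rw [aux_typeCount_eq, aux_typeCount_eq, Finset.filter_insert,
      if_neg (by rw [hbtype]; exact mtype_other_ne t), Finset.filter_erase,
      Finset.card_erase_of_mem (by simp [hsE, hstype])]
  have hcount_o : I.typeCount (insert b (E.erase s)) t.other = I.typeCount E t.other + 1 := by
    rw [aux_typeCount_eq, aux_typeCount_eq, Finset.filter_insert, if_pos hbtype,
      Finset.filter_erase, Finset.erase_eq_of_notMem
        (by simp only [Finset.mem_filter]; rintro ⟨-, h⟩; rw [hstype] at h; exact mtype_other_ne t h.symm),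
      Finset.card_insert_of_notMem (by simp only [Finset.mem_filter]; exact fun h => hbE h.1)]
  rw [hstep]
  refine ⟨?_, ?_, ?_, ?_, ?_, ?_⟩
  · intro c hc hcT
    rcases (hmem c).mp hc with rfl | ⟨hcE, -⟩
    · exact hbtype
    · exact h1 c hcE hcT
  · intro c hcT hc
    by_cases hcE : c ∈ E
    · have : c = s := by
        by_contra hne
        exact hc ((hmem c).mpr (Or.inr ⟨hcE, hne⟩))
      rw [this]; exact hstype
    · exact h2 c hcT hcE
  · intro c hcT hc c' hc' ht'
    rcases (hmem c').mp hc' with rfl | ⟨hc'E, hc's⟩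
    · rw [hbtype] at ht'; exact absurd ht' (mtype_other_ne t)
    by_cases hcE : c ∈ E
    · have hcs : c = s := by
        by_contra hne
        exact hc ((hmem c).mpr (Or.inr ⟨hcE, hne⟩))
      subst hcs
      exact lt_of_le_of_ne (elected.min'_le c' (by simp [helected, hc'E, ht'])) (Ne.symm hc's)
    · exact h3 c hcT hcE c' hc'E ht'
  · intro c hc hcT c' hc' ht'
    rcases (hmem c').mp hc' with rfl | ⟨hc'E, hc's⟩
    · rw [hbtype] at ht'; exact absurd ht' (mtype_other_ne t)
    rcases (hmem c).mp hc with rfl | ⟨hcE, -⟩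
    · exact lt_of_lt_of_le hbs
        (lt_of_le_of_ne (elected.min'_le c' (by simp [helected, hc'E, ht'])) (Ne.symm hc's)).le
    · exact h4 c hcE hcT c' hc'E ht'
  · rw [hcount_t, hcount_o]; omega
  · rw [hcount_t, hcount_o]; omega

end Inv

section Main
variable {n : ℕ} {C : Type} [Fintype C] [DecidableEq C]
set_option linter.unusedSectionVars false

theorem aux_greedyAux_inv (I : TypedInstance n C) (J : Fin n → ℕ) (t : MType) (k : ℕ)
    (E : Finset C) (h : GreedyInv I (I.oblivious J) t E) :
    GreedyInv I (I.oblivious J) t (I.greedyAux k E) := by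
  induction k generalizing E with
  | zero => exact h
  | succ k ih =>
    rw [show I.greedyAux (k+1) E = if I.CondA E then E else I.greedyAux k (I.swapStep E) from rfl]
    by_cases hA : I.CondA E
    · rw [if_pos hA]; exact h
    · rw [if_neg hA]; exact ih _ (aux_inv_swap I J t E hA h)

theorem aux_inv_init (I : TypedInstance n C) (hsup : I.SupplyCond) (J : Fin n → ℕ)
    (hsum : ∑ i, J i = I.h) (t : MType)
    (hover : I.typeCount (I.oblivious J) t.other < I.typeCount (I.oblivious J) t) :
    GreedyInv I (I.oblivious J) t (I.oblivious J) := by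
  refine ⟨fun c hc hcT => absurd hc hcT, fun c hc hcT => absurd hc hcT,
    fun c hc hcT => absurd hc hcT, fun c hc hcT => absurd hc hcT, hover.le, ?_⟩
  have hsumT := aux_typeCount_add I (I.oblivious J) t
  have hcard := aux_oblivious_card I hsup J hsum
  omega

end Main

/-- every elected candidate of the over-represented type has rank
at most `ℓ = Prefix(V(E_J), V(T_J))`. -/
theorem stmt9 {n : ℕ} {C : Type} [Fintype C] [DecidableEq C]
    (γ : ℕ → ℝ) (hγ : Signpost γ)
    (I : TypedInstance n C) (hsup : I.SupplyCond)
    (J : Fin n → ℕ) (hJ : J ∈ divisorSet γ I.Q I.h)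
    (hpar : ¬ I.CondA (I.oblivious J))
    (tstar : MType)
    (hover : I.typeCount (I.oblivious J) tstar.other <
      I.typeCount (I.oblivious J) tstar)
    (l : ℕ) (hl : l = I.prefixLen (I.greedy J) (I.oblivious J))
    (hlt : l < Fintype.card C) :
    ∀ c : C, I.mtype c = tstar → c ∈ I.greedy J → I.rank c ≤ l := by
  
  classical
  intro c hct hcE
  by_contra hrank
  push_neg at hrank
  have hJsum : ∑ i, J i = I.h := hJ.1
  have hInv : GreedyInv I (I.oblivious J) tstar (I.greedy J) :=
    aux_greedyAux_inv I J tstar I.h (I.oblivious J)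
      (aux_inv_init I hsup J hJsum tstar hover)
  obtain ⟨h1, h2, h3, h4, -, -⟩ := hInv
  have hnotagree : ¬ I.agreeUpTo (I.greedy J) (I.oblivious J) (l + 1) := by
    intro hag
    have hle : l + 1 ≤ I.prefixLen (I.greedy J) (I.oblivious J) := by
      unfold TypedInstance.prefixLen
      apply Finset.le_sup (f := id) (b := l + 1)
      simp only [Finset.mem_filter, Finset.mem_range]
      exact ⟨by omega, hag⟩
    omega
  unfold TypedInstance.agreeUpTo at hnotagree
  push_neg at hnotagree
  obtain ⟨c₀, hc₀r, hc₀⟩ := hnotagree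
  rcases hc₀ with ⟨hc₀E, hc₀T⟩ | ⟨hc₀E, hc₀T⟩
  · have := aux_rank_lt I (h4 c₀ hc₀E hc₀T c hcE hct)
    omega
  · have := aux_rank_lt I (h3 c₀ hc₀T hc₀E c hcE hct)
    omega
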